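/- For every nonnegative integer z and nonnegative integer n, the coefficient G_n^{(z)} of x^n/n! in the formal power series ((1/2) x^2/(e^x - x - 1))^z satisfies G_n^{(z)} = Σ_{i=0}^{n} C(z+i-1, i) C(z+n, n-i) 2^i n! Σ_{j=0}^{i} C(i,j) (-1)^j j! * S(n+i+j, j)/(n+i+j)!, where S denotes Stirling numbers of the second kind. -/

import Mathlib

open PowerSeries Finset

/-- Stirling numbers of the second kind. -/
def stirling : ℕ → ℕ → ℕ
  | 0, 0 => 1
  | 0, _ + 1 => 0
  | _ + 1, 0 => 0
  | p + 1, q + 1 => (q + 1) * stirling p (q + 1) + stirling p q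

lemma stirling_rec (p q : ℕ) :
    stirling (p+1) (q+1) = (q + 1) * stirling p (q + 1) + stirling p q := rfl

lemma stirling_zero (j : ℕ) : stirling 0 j = if j = 0 then 1 else 0 := by
  cases j <;> simp [stirling]

lemma stirling_zero' (m : ℕ) : stirling m 0 = if m = 0 then 1 else 0 := by
  cases m <;> simp [stirling]

lemma stirling_sum (m j : ℕ) :
    stirling (m+1) (j+1) = ∑ a ∈ range (m+1), m.choose a * stirling a j := by
  induction m generalizing j with
  | zero => simp [stirling]
  | succ m ih =>
    rw [Finset.sum_range_succ' (fun a => (m+1).choose a * stirling a j)]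
    have hsplit : ∑ a ∈ range (m+1), (m+1).choose (a+1) * stirling (a+1) j
        = ∑ a ∈ range (m+1), m.choose a * stirling (a+1) j
          + ∑ a ∈ range (m+1), m.choose (a+1) * stirling (a+1) j := by
      rw [← Finset.sum_add_distrib]
      exact Finset.sum_congr rfl fun a _ => by rw [Nat.choose_succ_succ, Nat.add_mul]
    rw [hsplit]
    have h2 : (∑ a ∈ range (m+1), m.choose (a+1) * stirling (a+1) j)
        + (m+1).choose 0 * stirling 0 j
        = stirling (m+1) (j+1) := by
      rw [Finset.sum_range_succ (fun a => m.choose (a+1) * stirling (a+1) j),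
        Nat.choose_succ_self, zero_mul, add_zero, ih j,
        Finset.sum_range_succ' (fun a => m.choose a * stirling a j)]
      simp
    conv_rhs => rw [add_assoc, h2]
    cases j with
    | zero =>
      have : ∑ a ∈ range (m+1), m.choose a * stirling (a+1) 0 = 0 :=
        Finset.sum_eq_zero fun a _ => by simp [stirling]
      rw [this, zero_add]
      show (0+1) * stirling (m+1) (0+1) + stirling (m+1) 0 = _
      simp [stirling]
    | succ q =>
      have : ∑ a ∈ range (m+1), m.choose a * stirling (a+1) (q+1)
          = (q+1) * stirling (m+1) (q+2) + stirling (m+1) (q+1) := by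
        have : ∀ a, m.choose a * stirling (a+1) (q+1)
            = (q+1) * (m.choose a * stirling a (q+1)) + m.choose a * stirling a q := by
          intro a; show m.choose a * ((q+1) * stirling a (q+1) + stirling a q) = _; ring
        rw [Finset.sum_congr rfl fun a _ => this a, Finset.sum_add_distrib,
          ← Finset.mul_sum, ← ih (q+1), ← ih q]
      rw [this]
      show (q+1+1) * stirling (m+1) (q+1+1) + stirling (m+1) (q+1) = _
      ring

lemma stirling_sum' (m j : ℕ) :
    ∑ a ∈ range m, m.choose a * stirling a j = (j+1) * stirling m (j+1) := by
  have h := stirling_sum m j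
  rw [Finset.sum_range_succ, Nat.choose_self, one_mul] at h
  cases m with
  | zero => simp [stirling_zero]
  | succ p =>
    rw [stirling_rec (p+1) j] at h
    omega

lemma coeff_expm1 (b : ℕ) :
    coeff (R := ℚ) b (exp ℚ - 1) = if b = 0 then 0 else 1 / (b.factorial : ℚ) := by
  rw [map_sub, coeff_exp, coeff_one]
  cases b with
  | zero => simp
  | succ c => simp

lemma coeff_expm1_pow (j m : ℕ) :
    coeff (R := ℚ) m ((exp ℚ - 1)^j)
      = (j.factorial : ℚ) * stirling m j / m.factorial := by
  induction j generalizing m with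
  | zero =>
    rw [pow_zero, coeff_one]
    cases m with
    | zero => simp [stirling_zero']
    | succ p => simp [stirling_zero']
  | succ j ih =>
    rw [pow_succ, coeff_mul, Finset.Nat.sum_antidiagonal_eq_sum_range_succ_mk,
      Finset.sum_range_succ]
    simp only [coeff_expm1, Nat.sub_self, if_pos rfl, mul_zero, add_zero]
    have step1 : ∀ k ∈ range m,
        coeff (R := ℚ) k ((exp ℚ - 1)^j) * (if m - k = 0 then (0:ℚ) else 1/((m-k).factorial : ℚ))
        = ((m.choose k : ℚ) * stirling k j) * ((j.factorial : ℚ) / m.factorial) := by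
      intro k hk
      rw [Finset.mem_range] at hk
      rw [ih k, if_neg (by omega)]
      rw [Nat.cast_choose ℚ (le_of_lt hk)]
      have h1 : (k.factorial : ℚ) ≠ 0 := Nat.cast_ne_zero.2 k.factorial_ne_zero
      have h2 : ((m-k).factorial : ℚ) ≠ 0 := Nat.cast_ne_zero.2 (m-k).factorial_ne_zero
      have h3 : (m.factorial : ℚ) ≠ 0 := Nat.cast_ne_zero.2 m.factorial_ne_zero
      field_simp
    rw [Finset.sum_congr rfl step1, ← Finset.sum_mul]
    have : (∑ k ∈ range m, (m.choose k : ℚ) * stirling k j)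
        = ((∑ a ∈ range m, m.choose a * stirling a j : ℕ) : ℚ) := by push_cast; rfl
    rw [this, stirling_sum' m j, Nat.factorial_succ]
    push_cast
    ring

noncomputable def Aser (a : ℕ) : PowerSeries ℚ :=
  PowerSeries.mk fun m => (-1:ℚ)^m * ((a + m - 1).choose m)

lemma Aser_zero : Aser 0 = 1 := by
  ext m
  rw [Aser, coeff_mk, coeff_one]
  cases m with
  | zero => simp
  | succ p => simp [Nat.choose_eq_zero_of_lt (Nat.lt_succ_self p)]

lemma Aser_succ_mul (a : ℕ) : Aser (a+1) * (1 + X) = Aser a := by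
  ext m
  rw [mul_add, mul_one, map_add, Aser, Aser, coeff_mk]
  cases m with
  | zero => simp [coeff_zero_mul_X]
  | succ p =>
    rw [coeff_succ_mul_X, coeff_mk, coeff_mk]
    have e1 : a + 1 + (p+1) - 1 = (a + p) + 1 := by omega
    have e2 : a + 1 + p - 1 = a + p := by omega
    have e3 : a + (p+1) - 1 = a + p := by omega
    rw [e1, e2, e3, Nat.choose_succ_succ (a+p) p]
    push_cast
    ring
lemma Aser_mul_pow (a : ℕ) : Aser a * (1 + X)^a = 1 := by
  induction a with
  | zero => simp [Aser_zero]
  | succ a ih => rw [pow_succ', ← mul_assoc, Aser_succ_mul, ih]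

lemma coeff_one_add_X_pow (b j : ℕ) :
    coeff (R := ℚ) j ((1 + X)^b) = (b.choose j : ℚ) := by
  rw [add_comm (1 : PowerSeries ℚ) X, add_pow]
  rw [map_sum]
  have : ∀ k ∈ range (b+1),
      coeff (R := ℚ) j (X^k * 1^(b-k) * (b.choose k : PowerSeries ℚ))
      = if k = j then (b.choose j : ℚ) else 0 := by
    intro k hk
    rw [one_pow, mul_one, ← map_natCast (C (R := ℚ)) (b.choose k), coeff_mul_C, coeff_X_pow]
    by_cases h : j = k
    · subst h; simp
    · simp [h, Ne.symm h]
  rw [Finset.sum_congr rfl this, Finset.sum_ite_eq' (range (b+1)) j]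
  by_cases hj : j ∈ range (b+1)
  · simp [hj]
  · rw [if_neg hj]
    rw [Finset.mem_range, not_lt] at hj
    rw [Nat.choose_eq_zero_of_lt (by omega)]
    norm_num

lemma final_key (a N : ℕ) :
    ∑ m ∈ range (N+1), ((-1:ℚ)^m * ((a + m - 1).choose m)) * ((a+N).choose (N-m)) = 1 := by
  have h1 : coeff (R := ℚ) N (Aser a * (1 + X)^(a+N)) = 1 := by
    rw [pow_add, ← mul_assoc, Aser_mul_pow, one_mul, coeff_one_add_X_pow, Nat.choose_self,
      Nat.cast_one]
  rw [coeff_mul, Finset.Nat.sum_antidiagonal_eq_sum_range_succ_mk] at h1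
  calc ∑ m ∈ range (N+1), ((-1:ℚ)^m * ((a + m - 1).choose m)) * ((a+N).choose (N-m))
      = ∑ m ∈ range (N+1), coeff (R := ℚ) m (Aser a) * coeff (R := ℚ) (N-m) ((1 + X)^(a+N)) :=
        Finset.sum_congr rfl fun m _ => by rw [Aser, coeff_mk, coeff_one_add_X_pow]
    _ = 1 := by simpa using h1

lemma key (z n k : ℕ) (hk : k ≤ n) :
    ∑ i ∈ range (n+1),
      (-1:ℚ)^i * ((z + i - 1).choose i) * ((z+n).choose (n-i)) * (i.choose k)
      = (-1:ℚ)^k * ((z + k - 1).choose k) := by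
  -- kill i < k, reindex i = k + m
  have hsplit : ∑ i ∈ range (n+1),
      (-1:ℚ)^i * ((z + i - 1).choose i) * ((z+n).choose (n-i)) * (i.choose k)
      = ∑ m ∈ range (n-k+1),
      (-1:ℚ)^(k+m) * ((z + (k+m) - 1).choose (k+m)) * ((z+n).choose (n-(k+m)))
        * ((k+m).choose k) := by
    rw [Finset.range_eq_Ico, ← Finset.sum_Ico_consecutive _ (Nat.zero_le k) (by omega : k ≤ n+1)]
    have hz : ∑ i ∈ Finset.Ico 0 k,
        (-1:ℚ)^i * ((z + i - 1).choose i) * ((z+n).choose (n-i)) * (i.choose k) = 0 :=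
      Finset.sum_eq_zero fun i hi => by
        rw [Finset.mem_Ico] at hi
        rw [Nat.choose_eq_zero_of_lt hi.2, Nat.cast_zero, mul_zero]
    rw [hz, zero_add, Finset.sum_Ico_eq_sum_range]
    have : n + 1 - k = n - k + 1 := by omega
    rw [this]
  rw [hsplit]
  -- nat identity: C(z+k+m-1, k+m) * C(k+m, k) = C(z+k-1,k) * C(z+k+m-1, m)
  have NI : ∀ m : ℕ, (((z + (k+m) - 1).choose (k+m) : ℚ) * ((k+m).choose k))
      = ((z + k - 1).choose k : ℚ) * (((z+k) + m - 1).choose m) := by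
    intro m
    cases z with
    | zero =>
      cases k with
      | zero => simp
      | succ k' =>
        have h1 : (0 + (k'+1+m) - 1).choose (k'+1+m) = 0 :=
          Nat.choose_eq_zero_of_lt (by omega)
        have h2 : (0 + (k'+1) - 1).choose (k'+1) = 0 :=
          Nat.choose_eq_zero_of_lt (by omega)
        rw [h1, h2]; simp
    | succ w =>
      have e1 : w + 1 + (k+m) - 1 = w + (k+m) := by omega
      have e2 : w + 1 + k - 1 = w + k := by omega
      have e3 : (w + 1 + k) + m - 1 = (w + k) + m := by omega
      rw [e1, e2, e3]
      rw [Nat.cast_choose ℚ (by omega : k + m ≤ w + (k+m)),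
          Nat.cast_choose ℚ (by omega : k ≤ k + m),
          Nat.cast_choose ℚ (by omega : k ≤ w + k),
          Nat.cast_choose ℚ (by omega : m ≤ (w+k) + m)]
      have e4 : w + (k+m) - (k+m) = w := by omega
      have e5 : k + m - k = m := by omega
      have e6 : w + k - k = w := by omega
      have e7 : (w+k) + m - m = w + k := by omega
      rw [e4, e5, e6, e7]
      have e8 : (w + (k + m)) = ((w + k) + m) := by omega
      rw [e8]
      have h1 : ((k+m).factorial : ℚ) ≠ 0 := Nat.cast_ne_zero.2 (Nat.factorial_ne_zero _)
      have h2 : (w.factorial : ℚ) ≠ 0 := Nat.cast_ne_zero.2 (Nat.factorial_ne_zero _)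
      have h3 : (k.factorial : ℚ) ≠ 0 := Nat.cast_ne_zero.2 (Nat.factorial_ne_zero _)
      have h4 : (m.factorial : ℚ) ≠ 0 := Nat.cast_ne_zero.2 (Nat.factorial_ne_zero _)
      have h5 : (((w+k)+m).factorial : ℚ) ≠ 0 := Nat.cast_ne_zero.2 (Nat.factorial_ne_zero _)
      have h6 : ((w+k).factorial : ℚ) ≠ 0 := Nat.cast_ne_zero.2 (Nat.factorial_ne_zero _)
      field_simp
  have step : ∀ m ∈ range (n-k+1),
      (-1:ℚ)^(k+m) * ((z + (k+m) - 1).choose (k+m)) * ((z+n).choose (n-(k+m)))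
        * ((k+m).choose k)
      = ((-1:ℚ)^k * ((z + k - 1).choose k)) *
        ((-1:ℚ)^m * (((z+k) + m - 1).choose m) * (((z+k)+(n-k)).choose ((n-k)-m))) := by
    intro m hm
    have hnk : z + n = (z+k) + (n-k) := by omega
    have hnm : n - (k+m) = (n-k) - m := by omega
    rw [pow_add, hnk, hnm]
    linear_combination ((-1:ℚ)^k * (-1:ℚ)^m * (((z+k)+(n-k)).choose ((n-k)-m) : ℚ)) * NI m
  rw [Finset.sum_congr rfl step, ← Finset.mul_sum]
  rw [final_key (z+k) (n-k)]
  rw [mul_one]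

noncomputable def gser : PowerSeries ℚ := PowerSeries.mk fun m => (2:ℚ)/((m+2).factorial)

lemma X_sq_mul_g : (X : PowerSeries ℚ)^2 * gser = C (R := ℚ) 2 * (exp ℚ - X - 1) := by
  ext m
  rw [coeff_X_pow_mul', coeff_C_mul, map_sub, map_sub, coeff_exp, coeff_X, coeff_one]
  match m with
  | 0 => norm_num
  | 1 => norm_num [Nat.factorial]
  | (m+2) =>
    rw [if_pos (by omega : 2 ≤ m + 2)]
    have : m + 2 - 2 = m := by omega
    rw [this, gser, coeff_mk]
    have : (m+2 ≠ 0) := by omega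
    simp only [Algebra.algebraMap_self, RingHom.id_apply]
    rw [if_neg (by omega : ¬ m+2 = 1), if_neg this, div_eq_mul_inv]
    norm_num

lemma gser_mul_H (H : PowerSeries ℚ)
    (hH : (exp ℚ - X - 1) * H = C (R := ℚ) (1/2) * X^2) : gser * H = 1 := by
  have hX : (X : PowerSeries ℚ)^2 ≠ 0 := pow_ne_zero _ X_ne_zero
  apply mul_left_cancel₀ hX
  rw [mul_one]
  calc (X : PowerSeries ℚ)^2 * (gser * H) = ((X:PowerSeries ℚ)^2 * gser) * H := by ring
    _ = C (R := ℚ) 2 * ((exp ℚ - X - 1) * H) := by rw [X_sq_mul_g]; ring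
    _ = C (R := ℚ) 2 * (C (R := ℚ) (1/2) * X^2) := by rw [hH]
    _ = X^2 := by rw [← mul_assoc, ← map_mul]; norm_num

lemma gser_const : constantCoeff (R := ℚ) gser = 1 := by
  rw [← coeff_zero_eq_constantCoeff_apply, gser, coeff_mk]
  norm_num [Nat.factorial]

lemma coeff_psi_pow_high (m k : ℕ) (hmk : m < k) : coeff (R := ℚ) m ((gser - 1)^k) = 0 := by
  have h1 : (X : PowerSeries ℚ) ∣ (gser - 1) := by
    rw [X_dvd_iff, map_sub, gser_const, map_one, sub_self]
  exact X_pow_dvd_iff.1 (pow_dvd_pow_of_dvd h1 k) m hmk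

noncomputable def cc (w k : ℕ) : ℚ := (-1:ℚ)^k * ((w + k - 1).choose k)

lemma neg_binom (H : PowerSeries ℚ) (hgH : gser * H = 1) (n : ℕ) :
    ∀ (z : ℕ), ∀ m ≤ n, coeff (R := ℚ) m (H^z)
      = ∑ k ∈ range (n+1), cc z k * coeff (R := ℚ) m ((gser - 1)^k) := by
  intro z
  induction z with
  | zero =>
    intro m _
    rw [pow_zero, Finset.sum_eq_single 0]
    · simp [cc]
    · intro k _ hk
      have h0 : (0 + k - 1).choose k = 0 := Nat.choose_eq_zero_of_lt (by omega)
      rw [cc, h0]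
      simp
    · intro h; exact absurd (Finset.mem_range.2 (by omega)) h
  | succ z ih =>
    have pascal : ∀ k, cc (z+1) (k+1) + cc (z+1) k = cc z (k+1) := by
      intro k
      simp only [cc]
      have e1 : z + 1 + (k+1) - 1 = (z+k) + 1 := by omega
      have e2 : z + 1 + k - 1 = z + k := by omega
      have e3 : z + (k+1) - 1 = z + k := by omega
      rw [e1, e2, e3, Nat.choose_succ_succ (z+k) k]
      push_cast
      ring
    have star : ∀ a ≤ n, ∑ k ∈ range (n+1), cc (z+1) k * coeff (R := ℚ) a ((gser-1)^k * gser)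
        = ∑ k ∈ range (n+1), cc z k * coeff (R := ℚ) a ((gser-1)^k) := by
      intro a ha
      have hsplit : ∀ k : ℕ, (gser-1)^k * gser = (gser-1)^k + (gser-1)^(k+1) := by
        intro k; ring
      simp_rw [hsplit, map_add, mul_add]
      rw [Finset.sum_add_distrib]
      rw [Finset.sum_range_succ' (fun k => cc (z+1) k * coeff (R := ℚ) a ((gser-1)^k))]
      rw [Finset.sum_range_succ (fun k => cc (z+1) k * coeff (R := ℚ) a ((gser-1)^(k+1)))]
      rw [coeff_psi_pow_high a (n+1) (by omega), mul_zero, add_zero]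
      rw [Finset.sum_range_succ' (fun k => cc z k * coeff (R := ℚ) a ((gser-1)^k))]
      have hc0 : cc (z+1) 0 = cc z 0 := by simp [cc]
      have hS : (∑ k ∈ range n, cc (z+1) (k+1) * coeff (R := ℚ) a ((gser-1)^(k+1)))
          + (∑ k ∈ range n, cc (z+1) k * coeff (R := ℚ) a ((gser-1)^(k+1)))
          = ∑ k ∈ range n, cc z (k+1) * coeff (R := ℚ) a ((gser-1)^(k+1)) := by
        rw [← Finset.sum_add_distrib]
        exact Finset.sum_congr rfl fun k _ => by rw [← pascal k]; ring
      rw [hc0]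
      linear_combination hS
    intro m hm
    symm
    calc ∑ k ∈ range (n+1), cc (z+1) k * coeff (R := ℚ) m ((gser-1)^k)
        = ∑ k ∈ range (n+1), cc (z+1) k * coeff (R := ℚ) m (((gser-1)^k * gser) * H) := by
          apply Finset.sum_congr rfl; intro k _
          rw [mul_assoc, hgH, mul_one]
      _ = ∑ k ∈ range (n+1), cc (z+1) k *
            ∑ p ∈ Finset.HasAntidiagonal.antidiagonal m, coeff (R := ℚ) p.1 ((gser-1)^k * gser) * coeff (R := ℚ) p.2 H := by
          simp_rw [coeff_mul]
      _ = ∑ p ∈ Finset.HasAntidiagonal.antidiagonal m,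
            (∑ k ∈ range (n+1), cc (z+1) k * coeff (R := ℚ) p.1 ((gser-1)^k * gser)) * coeff (R := ℚ) p.2 H := by
          simp_rw [Finset.mul_sum, ← mul_assoc]
          rw [Finset.sum_comm]
          simp_rw [Finset.sum_mul]
      _ = ∑ p ∈ Finset.HasAntidiagonal.antidiagonal m,
            (∑ k ∈ range (n+1), cc z k * coeff (R := ℚ) p.1 ((gser-1)^k)) * coeff (R := ℚ) p.2 H := by
          apply Finset.sum_congr rfl; intro p hp
          have hp1 : p.1 ≤ m := Finset.HasAntidiagonal.antidiagonal.fst_le hp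
          rw [star p.1 (le_trans hp1 hm)]
      _ = ∑ p ∈ Finset.HasAntidiagonal.antidiagonal m, coeff (R := ℚ) p.1 (H^z) * coeff (R := ℚ) p.2 H := by
          apply Finset.sum_congr rfl; intro p hp
          have hp1 : p.1 ≤ m := Finset.HasAntidiagonal.antidiagonal.fst_le hp
          rw [ih p.1 (le_trans hp1 hm)]
      _ = coeff (R := ℚ) m (H^(z+1)) := by rw [pow_succ, coeff_mul]

lemma coeff_g_pow (n i : ℕ) (hi : i ≤ n) :
    coeff (R := ℚ) n (gser^i) = ∑ k ∈ range (n+1), (i.choose k : ℚ) * coeff (R := ℚ) n ((gser-1)^k) := by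
  have h1 : gser^i = ((gser - 1) + 1)^i := by ring
  rw [h1, add_pow, map_sum]
  have h2 : ∀ k ∈ range (i+1),
      coeff (R := ℚ) n ((gser-1)^k * 1^(i-k) * (i.choose k : PowerSeries ℚ))
      = (i.choose k : ℚ) * coeff (R := ℚ) n ((gser-1)^k) := by
    intro k _
    rw [one_pow, mul_one, ← map_natCast (C (R := ℚ)) (i.choose k), coeff_mul_C, mul_comm]
  rw [Finset.sum_congr rfl h2]
  apply Finset.sum_subset (Finset.range_subset_range.2 (by omega))
  intro k _ hk
  rw [Finset.mem_range, not_lt] at hk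
  rw [Nat.choose_eq_zero_of_lt (by omega), Nat.cast_zero, zero_mul]

lemma coeff_gser_pow_eq (n i : ℕ) :
    coeff (R := ℚ) n (gser^i) = ∑ j ∈ range (i+1),
      ((-1:ℚ)^(i-j) * (i.choose j)) *
        ((2:ℚ)^i * ((j.factorial : ℚ) * stirling (n+i+j) j / ((n+i+j).factorial : ℚ))) := by
  have c1 : coeff (R := ℚ) n (gser^i) = coeff (R := ℚ) (n+2*i) ((X:PowerSeries ℚ)^(2*i) * gser^i) :=
    (coeff_X_pow_mul _ (2*i) n).symm
  have hrw : exp ℚ - X - 1 = (exp ℚ - 1) + (-X) := by ring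
  have c2 : (X:PowerSeries ℚ)^(2*i) * gser^i = C (R := ℚ) (2^i) * ((exp ℚ - 1) + (-X))^i := by
    rw [pow_mul, ← mul_pow, X_sq_mul_g, hrw, mul_pow, ← map_pow]
  rw [c1, c2, add_pow, Finset.mul_sum, map_sum]
  apply Finset.sum_congr rfl
  intro j hj
  rw [Finset.mem_range] at hj
  have hji : j ≤ i := by omega
  have hX : (-X : PowerSeries ℚ)^(i-j) = C (R := ℚ) ((-1:ℚ)^(i-j)) * X^(i-j) := by
    rw [neg_pow, map_pow, map_neg, map_one]
  have harr : C (R := ℚ) (2^i) * ((exp ℚ - 1)^j * (-X)^(i-j) * ((i.choose j : ℕ) : PowerSeries ℚ))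
      = C (R := ℚ) (2^i * ((-1:ℚ)^(i-j)) * (i.choose j)) * ((exp ℚ - 1)^j * X^(i-j)) := by
    rw [hX, ← map_natCast (C (R := ℚ)) (i.choose j)]
    simp only [map_mul]
    ring
  rw [harr, coeff_C_mul, coeff_mul_X_pow', if_pos (by omega : i - j ≤ n + 2*i)]
  have : n + 2*i - (i-j) = n + i + j := by omega
  rw [this, coeff_expm1_pow]
  ring

/-- The coefficient `G_n^{(z)}` of `x^n/n!` in `((1/2)x²/(e^x - x - 1))^z` equals
`Σ_{i=0}^{n} C(z+i-1,i) C(z+n,n-i) 2^i n! Σ_{j=0}^{i} C(i,j)(-1)^j j! S(n+i+j,j)/(n+i+j)!`. -/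
theorem potential_polynomial_stirling (z : ℕ) (H : PowerSeries ℚ)
    (hH : (PowerSeries.exp ℚ - PowerSeries.X - 1) * H =
      PowerSeries.C (R := ℚ) (1 / 2) * PowerSeries.X ^ 2)
    (n : ℕ) :
    (n.factorial : ℚ) * PowerSeries.coeff (R := ℚ) n (H ^ z) =
      ∑ i ∈ Finset.range (n + 1),
        ((z + i - 1).choose i : ℚ) * ((z + n).choose (n - i) : ℚ) * 2 ^ i * (n.factorial : ℚ) *
          ∑ j ∈ Finset.range (i + 1),
            (i.choose j : ℚ) * (-1) ^ j * (j.factorial : ℚ) *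
              (stirling (n + i + j) j : ℚ) / ((n + i + j).factorial : ℚ) := by
  have hgH : gser * H = 1 := gser_mul_H H hH
  -- step 1: rewrite each term via coeff of gser^i
  have step1 : ∀ i ∈ range (n+1),
      ((z + i - 1).choose i : ℚ) * ((z + n).choose (n - i) : ℚ) * 2 ^ i * (n.factorial : ℚ) *
          ∑ j ∈ Finset.range (i + 1),
            (i.choose j : ℚ) * (-1) ^ j * (j.factorial : ℚ) *
              (stirling (n + i + j) j : ℚ) / ((n + i + j).factorial : ℚ)
      = (n.factorial : ℚ) * (((-1:ℚ)^i * ((z + i - 1).choose i) * ((z+n).choose (n-i)))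
          * coeff (R := ℚ) n (gser^i)) := by
    intro i _
    rw [coeff_gser_pow_eq n i, Finset.mul_sum, Finset.mul_sum]
    rw [Finset.mul_sum]
    apply Finset.sum_congr rfl
    intro j hj
    rw [Finset.mem_range] at hj
    have hji : j ≤ i := by omega
    have hsq : ((-1:ℚ)^(i-j)) * ((-1:ℚ)^(i-j)) = 1 := by
      rw [← pow_add, ← two_mul, pow_mul]; norm_num
    have hsplitpow : (-1:ℚ)^i = (-1:ℚ)^(i-j) * (-1:ℚ)^j := by
      rw [← pow_add, Nat.sub_add_cancel hji]
    linear_combination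
      (-((((z + i - 1).choose i : ℚ) * ((z + n).choose (n - i)) * (n.factorial : ℚ) *
          (i.choose j) * 2^i * (j.factorial : ℚ) * (stirling (n+i+j) j : ℚ) /
          ((n+i+j).factorial : ℚ)) * ((-1:ℚ)^j))) * hsq
      + (-((((z + i - 1).choose i : ℚ) * ((z + n).choose (n - i)) * (n.factorial : ℚ) *
          (i.choose j) * 2^i * (j.factorial : ℚ) * (stirling (n+i+j) j : ℚ) /
          ((n+i+j).factorial : ℚ)) * ((-1:ℚ)^(i-j)))) * hsplitpow
  rw [Finset.sum_congr rfl step1, ← Finset.mul_sum]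
  congr 1
  -- step 2: expand gser^i, swap, apply key, neg_binom
  have step2 : ∀ i ∈ range (n+1),
      ((-1:ℚ)^i * ((z + i - 1).choose i) * ((z+n).choose (n-i))) * coeff (R := ℚ) n (gser^i)
      = ∑ k ∈ range (n+1),
          ((-1:ℚ)^i * ((z + i - 1).choose i) * ((z+n).choose (n-i)) * (i.choose k))
            * coeff (R := ℚ) n ((gser-1)^k) := by
    intro i hi
    rw [Finset.mem_range] at hi
    rw [coeff_g_pow n i (by omega), Finset.mul_sum]
    apply Finset.sum_congr rfl
    intro k _
    ring
  rw [Finset.sum_congr rfl step2, Finset.sum_comm]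
  have step3 : ∀ k ∈ range (n+1),
      ∑ i ∈ range (n+1),
        ((-1:ℚ)^i * ((z + i - 1).choose i) * ((z+n).choose (n-i)) * (i.choose k))
          * coeff (R := ℚ) n ((gser-1)^k)
      = cc z k * coeff (R := ℚ) n ((gser-1)^k) := by
    intro k hk
    rw [Finset.mem_range] at hk
    rw [← Finset.sum_mul, key z n k (by omega)]
    rfl
  rw [Finset.sum_congr rfl step3]
  exact neg_binom H hgH n z n le_rfl
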